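/- arXiv:math/0504204 — 3 statements merged into one kernel-verified Lean document; each statement's English description precedes it below -/
import Mathlib

section
/- Let R be a Bézout domain (an integral domain in which every finitely generated ideal is principal). Then every finitely generated submodule of a finite free R-module is free. -/
set_option maxHeartbeats 1000000
set_option synthInstance.maxHeartbeats 400000

open LinearMap

private noncomputable def finConsLEquiv (n : ℕ) (R : Type*) [Semiring R] :
    (Fin (n + 1) → R) ≃ₗ[R] R × (Fin n → R) :=
  { (Fin.consEquiv fun _ : Fin (n + 1) => R).symm with
    map_add' := fun _ _ => rfl
    map_smul' := fun _ _ => rfl }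

private theorem free_of_le_ker {R P : Type*} [CommRing R] [AddCommGroup P] [Module R P]
    (hP : ∀ K : Submodule R P, K.FG → Module.Free R K)
    (N : Submodule R (R × P)) (hle : ∀ x ∈ N, Prod.fst x = 0) (hN : N.FG) :
    Module.Free R N := by
  have hinj : Function.Injective ((LinearMap.snd R R P).comp N.subtype) := by
    intro x y hxy
    have h1 : (x : R × P).1 = (y : R × P).1 := by rw [hle _ x.2, hle _ y.2]
    have h2 : (x : R × P).2 = (y : R × P).2 := hxy
    exact Subtype.ext (Prod.ext h1 h2)
  have hrange : range ((LinearMap.snd R R P).comp N.subtype)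
      = N.map (LinearMap.snd R R P) := by
    rw [LinearMap.range_comp, Submodule.range_subtype]
  have := hP (N.map (LinearMap.snd R R P)) (hN.map _)
  exact Module.Free.of_equiv
    ((LinearEquiv.ofInjective _ hinj).trans (LinearEquiv.ofEq _ _ hrange)).symm

private theorem free_step {R : Type*} [CommRing R] [IsDomain R] [IsBezout R]
    {P : Type*} [AddCommGroup P] [Module R P]
    (hP : ∀ K : Submodule R P, K.FG → Module.Free R K)
    (N : Submodule R (R × P)) (hN : N.FG) : Module.Free R N := by
  classical
  set g : N →ₗ[R] R := (LinearMap.fst R R P).comp N.subtype with hg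
  have hIfg : (LinearMap.range g).FG := by
    rw [hg, LinearMap.range_comp, Submodule.range_subtype]
    exact hN.map _
  obtain ⟨a, ha⟩ := (IsBezout.isPrincipal_of_FG _ hIfg).1
  by_cases h0 : a = 0
  · -- N ≤ ker fst
    refine free_of_le_ker hP N (fun x hx => ?_) hN
    have : g ⟨x, hx⟩ ∈ LinearMap.range g := LinearMap.mem_range_self _ _
    rw [ha, h0, Submodule.span_zero_singleton, Submodule.mem_bot] at this
    simpa [hg] using this
  · -- range g ≅ R is free, split off
    have e₁ : R ≃ₗ[R] ↥(LinearMap.range g) :=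
      (LinearEquiv.toSpanNonzeroSingleton R R a h0).trans
        (LinearEquiv.ofEq _ _ ha.symm)
    have hfree : Module.Free R ↥(LinearMap.range g) := Module.Free.of_equiv e₁
    haveI hproj : Module.Projective R ↥(LinearMap.range g) := Module.Projective.of_free
    have hsurj : LinearMap.range g.rangeRestrict = ⊤ :=
      LinearMap.range_eq_top.mpr g.surjective_rangeRestrict
    obtain ⟨s, hs⟩ := LinearMap.exists_rightInverse_of_surjective (f := g.rangeRestrict) hsurj
    -- split: N ≃ₗ ker g.rangeRestrict × range g
    obtain ⟨e, -⟩ := (Function.Exact.splitSurjectiveEquiv (R := R) (M := LinearMap.ker g.rangeRestrict) (N := N)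
      (P := LinearMap.range g) (LinearMap.exact_subtype_ker_map g.rangeRestrict)
      (Submodule.injective_subtype (LinearMap.ker g.rangeRestrict))) ⟨s, hs⟩
    -- ker g.rangeRestrict is fg
    have hkk : LinearMap.ker g.rangeRestrict = LinearMap.ker g := LinearMap.ker_rangeRestrict g
    have hfin : Module.Finite R N := Module.Finite.iff_fg.mpr hN
    have hkfg : (LinearMap.ker g.rangeRestrict).FG := by
      have hr : LinearMap.ker g.rangeRestrict
          = Submodule.map (LinearMap.id - s ∘ₗ g.rangeRestrict) ⊤ := by
        ext x
        simp only [Submodule.mem_map, Submodule.mem_top, true_and, LinearMap.mem_ker]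
        constructor
        · intro hx
          exact ⟨x, by simp [LinearMap.sub_apply, hx]⟩
        · rintro ⟨y, rfl⟩
          have : g.rangeRestrict (s (g.rangeRestrict y)) = g.rangeRestrict y :=
            LinearMap.congr_fun hs (g.rangeRestrict y)
          simp [LinearMap.sub_apply, this]
      rw [hr]
      exact Submodule.FG.map (f := LinearMap.id - s ∘ₗ g.rangeRestrict) ((Submodule.fg_top N).mpr hN)
    -- ker g, viewed in R × P, is ≤ ker fst
    have hker_free : Module.Free R ↥(LinearMap.ker g.rangeRestrict) := by
      have hKfg : ((LinearMap.ker g.rangeRestrict).map N.subtype).FG := hkfg.map _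
      have hKle : ∀ x ∈ (LinearMap.ker g.rangeRestrict).map N.subtype, Prod.fst x = 0 := by
        rintro x ⟨y, hy, rfl⟩
        rw [hkk] at hy
        exact hy
      have := free_of_le_ker hP _ hKle hKfg
      exact Module.Free.of_equiv
        (Submodule.equivMapOfInjective N.subtype (Submodule.injective_subtype N) _).symm
    exact Module.Free.of_equiv e.symm

private theorem free_fin {R : Type*} [CommRing R] [IsDomain R] [IsBezout R] :
    ∀ (n : ℕ) (N : Submodule R (Fin n → R)), N.FG → Module.Free R N := by
  intro n
  induction n with
  | zero =>
    intro N _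
    infer_instance
  | succ n ih =>
    intro N hN
    set e := finConsLEquiv n R
    have hfree := free_step (P := Fin n → R) ih (N.map e.toLinearMap) (hN.map _)
    exact Module.Free.of_equiv (e.submoduleMap N).symm

/-- Over a Bézout domain (an integral domain in which every finitely generated ideal is
principal), every finitely generated submodule of a finite free module is free. -/
theorem fg_submodule_of_finite_free_is_free
    {R : Type*} [CommRing R] [IsDomain R] [IsBezout R]
    {M : Type*} [AddCommGroup M] [Module R M]
    [Module.Free R M] [Module.Finite R M]
    (N : Submodule R M) (hN : N.FG) :
    Module.Free R ↥N := by
  classical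
  let b := Module.Free.chooseBasis R M
  let n := Fintype.card (Module.Free.ChooseBasisIndex R M)
  let e : M ≃ₗ[R] (Fin n → R) :=
    (b.reindex (Fintype.equivFin _)).equivFun
  have hfree := free_fin n (N.map e.toLinearMap) (hN.map _)
  exact Module.Free.of_equiv (e.submoduleMap N).symm
end

section
/- Let K be a perfect field of characteristic p equipped with a valuation v_K, let W(K) be the ring of p-typical Witt vectors over K, and for x = Σ_{i≥0} [z_i] p^i ∈ W(K) (Teichmüller expansion) define the partial valuation v_n(x) = min_{i ≤ n} v_K(z_i). Then for all x, y ∈ W(K) and all n, v_n(x + y) ≥ min(v_n(x), v_n(y)), with equality if the minimum is achieved exactly once. -/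
/-- `z` is the sequence of Teichmüller coordinates of the Witt vector `x`:
`x = ∑_{i≥0} [z i] pⁱ`, expressed via the `p`-adic congruences saying that `x` agrees with
each partial sum modulo `p^(n+1)`. -/
def IsTeichmullerExpansion (p : ℕ) [Fact p.Prime] {K : Type*} [CommRing K]
    (z : ℕ → K) (x : WittVector p K) : Prop :=
  ∀ n : ℕ, (p : WittVector p K) ^ (n + 1) ∣
    (x - ∑ i ∈ Finset.range (n + 1),
      WittVector.teichmuller p (z i) * (p : WittVector p K) ^ i)

/-- The partial valuation `v_n(x) = min_{i ≤ n} v_K(z_i)` of a Witt vector with Teichmüller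
coordinates `z`. -/
noncomputable def partialVal {K : Type*} (vK : K → WithTop ℝ)
    (z : ℕ → K) (n : ℕ) : WithTop ℝ :=
  (Finset.range (n + 1)).inf fun i => vK (z i)

namespace WittAux

lemma partialVal_le {K : Type*} (vK : K → WithTop ℝ) (z : ℕ → K) {n i : ℕ} (h : i ≤ n) :
    partialVal vK z n ≤ vK (z i) :=
  Finset.inf_le (Finset.mem_range.mpr (Nat.lt_succ_of_le h))

lemma le_partialVal {K : Type*} (vK : K → WithTop ℝ) (z : ℕ → K) {n : ℕ} {w : WithTop ℝ}
    (h : ∀ i ≤ n, w ≤ vK (z i)) : w ≤ partialVal vK z n :=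
  Finset.le_inf fun i hi => h i (Nat.lt_succ_iff.mp (Finset.mem_range.mp hi))

end WittAux


set_option linter.unusedSectionVars false

namespace WittAux

open WittVector Finset Function

variable {p : ℕ} [hp : Fact p.Prime] {R : Type*} [CommRing R] [CharP R p]

local notation "𝕎" => WittVector p

lemma frobenius_teichmuller (a : R) :
    frobenius (teichmuller p a) = teichmuller p (a ^ p) := by
  ext n
  cases n with
  | zero =>
      rw [coeff_frobenius_charP, teichmuller_coeff_zero, teichmuller_coeff_zero]
  | succ n =>
      rw [coeff_frobenius_charP, teichmuller_coeff_pos p _ (n + 1) (Nat.succ_pos n),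
        teichmuller_coeff_pos p _ (n + 1) (Nat.succ_pos n), zero_pow hp.out.ne_zero]

lemma mul_p_pow (x : 𝕎 R) (i : ℕ) :
    x * (p : 𝕎 R) ^ i = verschiebung^[i] (frobenius^[i] x) := by
  induction i with
  | zero => simp
  | succ i ih =>
      rw [pow_succ, ← mul_assoc, ih, ← verschiebung_frobenius,
        Function.iterate_succ_apply', Function.iterate_succ_apply']
      congr 1
      exact ((verschiebung_frobenius_comm (p := p) (R := R)).symm.iterate_right i) _

lemma teich_mul_p_pow (a : R) (i : ℕ) :
    teichmuller p a * (p : 𝕎 R) ^ i = verschiebung^[i] (teichmuller p (a ^ p ^ i)) := by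
  rw [mul_p_pow]
  congr 1
  induction i with
  | zero => simp
  | succ i ih =>
      rw [Function.iterate_succ_apply', ih, frobenius_teichmuller, ← pow_mul, pow_succ]

lemma coeff_iterate_verschiebung_eq_zero (x : 𝕎 R) {i j : ℕ} (h : j < i) :
    (verschiebung^[i] x).coeff j = 0 := by
  induction i generalizing j with
  | zero => omega
  | succ i ih =>
      rw [Function.iterate_succ_apply']
      cases j with
      | zero => exact verschiebung_coeff_zero _
      | succ j => rw [verschiebung_coeff_succ]; exact ih (by omega)

lemma coeff_iterate_verschiebung_teich (w : R) (i j : ℕ) :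
    (verschiebung^[i] (teichmuller p w)).coeff j = if j = i then w else 0 := by
  induction i generalizing j with
  | zero =>
      cases j with
      | zero => simp
      | succ j => simp [teichmuller_coeff_pos p _ (j + 1) (Nat.succ_pos j)]
  | succ i ih =>
      rw [Function.iterate_succ_apply']
      cases j with
      | zero => simp [verschiebung_coeff_zero]
      | succ j => simp [verschiebung_coeff_succ, ih]

lemma coeff_sum_teich (z : ℕ → R) (m k : ℕ) :
    (∑ i ∈ Finset.range m, teichmuller p (z i) * (p : 𝕎 R) ^ i).coeff k
      = if k < m then z k ^ p ^ k else 0 := by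
  induction m generalizing k with
  | zero => simp [WittVector.zero_coeff]
  | succ m ih =>
      rw [Finset.sum_range_succ, coeff_add_of_disjoint]
      · rw [ih, teich_mul_p_pow, coeff_iterate_verschiebung_teich]
        rcases lt_trichotomy k m with h | h | h
        · have h1 : k < m + 1 := by omega
        
          have h2 : k ≠ m := by omega
          simp [h, h1, h2]
        · subst h; simp
        · have h1 : ¬ k < m := by omega
          have h2 : ¬ k < m + 1 := by omega
          have h3 : k ≠ m := by omega
          simp [h1, h2, h3]
      · intro k'
        rw [ih, teich_mul_p_pow, coeff_iterate_verschiebung_teich]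
        rcases eq_or_ne k' m with h | h
        · subst h; simp
        · right; simp [h]

lemma coeff_eq_of_dvd {A B : 𝕎 R} {n : ℕ} (h : (p : 𝕎 R) ^ (n + 1) ∣ A - B) :
    ∀ j ≤ n, A.coeff j = B.coeff j := by
  intro j hj
  obtain ⟨t, ht⟩ := h
  have hker : A - B ∈ RingHom.ker (truncate (p := p) (R := R) (n + 1)) := by
    rw [mem_ker_truncate]
    intro i hi
    rw [ht, mul_comm, mul_p_pow]
    exact coeff_iterate_verschiebung_eq_zero _ hi
  rw [RingHom.mem_ker, map_sub, sub_eq_zero] at hker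
  have h2 := congrArg (fun w => TruncatedWittVector.coeff ⟨j, Nat.lt_succ_of_le hj⟩ w) hker
  simpa using h2

/-- From a single-level Teichmüller congruence, read off the coefficients. -/
lemma coeff_of_expansion {x : 𝕎 R} {z : ℕ → R} {n : ℕ}
    (h : (p : 𝕎 R) ^ (n + 1) ∣
      (x - ∑ i ∈ Finset.range (n + 1), teichmuller p (z i) * (p : 𝕎 R) ^ i)) :
    ∀ j ≤ n, x.coeff j = z j ^ p ^ j := by
  intro j hj
  rw [coeff_eq_of_dvd h j hj, coeff_sum_teich, if_pos (Nat.lt_succ_of_le hj)]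

variable {K : Type*} [Field K] {vK : K → WithTop ℝ}

section vlems
variable (hv0 : ∀ a : K, vK a = ⊤ ↔ a = 0)
    (hvmul : ∀ a b : K, vK (a * b) = vK a + vK b)
    (hvadd : ∀ a b : K, min (vK a) (vK b) ≤ vK (a + b))

include hv0 hvmul in
lemma vK_one : vK 1 = 0 := by
  have h := hvmul 1 1
  rw [one_mul] at h
  have hne : vK 1 ≠ ⊤ := fun hh => one_ne_zero ((hv0 1).mp hh)
  obtain ⟨r, hr⟩ := WithTop.ne_top_iff_exists.mp hne
  rw [← hr] at h ⊢
  norm_cast at h ⊢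
  linarith

include hv0 hvmul in
lemma vK_neg (a : K) : vK (-a) = vK a := by
  have h1 : vK (-1 : K) = 0 := by
    have h := hvmul (-1 : K) (-1)
    rw [neg_mul_neg, one_mul, vK_one hv0 hvmul] at h
    have hne : vK (-1 : K) ≠ ⊤ := fun hh => by
      have := (hv0 _).mp hh; simp at this
    obtain ⟨r, hr⟩ := WithTop.ne_top_iff_exists.mp hne
    rw [← hr] at h ⊢
    norm_cast at h ⊢
    linarith
  calc vK (-a) = vK ((-1) * a) := by rw [neg_one_mul]
  _ = vK (-1) + vK a := hvmul _ _
  _ = vK a := by rw [h1, zero_add]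

include hv0 hvmul in
lemma vK_pow_nonneg {a : K} (h : 0 ≤ vK a) (k : ℕ) : 0 ≤ vK (a ^ k) := by
  induction k with
  | zero => rw [pow_zero, vK_one hv0 hvmul]
  | succ k ih => rw [pow_succ, hvmul]; exact add_nonneg ih h

include hv0 hvmul in
lemma vK_pow_eq_zero {a : K} (h : vK a = 0) (k : ℕ) : vK (a ^ k) = 0 := by
  induction k with
  | zero => rw [pow_zero, vK_one hv0 hvmul]
  | succ k ih => rw [pow_succ, hvmul, ih, h, add_zero]

include hv0 hvmul in
lemma vK_pow_pos {a : K} (h : 0 < vK a) {k : ℕ} (hk : k ≠ 0) : 0 < vK (a ^ k) := by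
  obtain ⟨k, rfl⟩ := Nat.exists_eq_succ_of_ne_zero hk
  rw [pow_succ, hvmul]
  exact lt_of_lt_of_le h (le_add_of_nonneg_left (vK_pow_nonneg hv0 hvmul h.le k))

include hvmul in
lemma vK_pow_neg {a : K} (h : vK a < 0) {k : ℕ} (hk : k ≠ 0) : vK (a ^ k) < 0 := by
  induction k with
  | zero => exact absurd rfl hk
  | succ k ih =>
      rcases Nat.eq_zero_or_pos k with hk0 | hk0
      · subst hk0; rwa [pow_one]
      · rw [pow_succ, hvmul]
        calc vK (a ^ k) + vK a ≤ vK (a ^ k) + 0 := add_le_add le_rfl h.le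
        _ = vK (a ^ k) := add_zero _
        _ < 0 := ih hk0.ne'

include hv0 hvmul hvadd in
/-- ultrametric equality when the two summands have distinct valuations -/
lemma vK_add_eq {e f : K} (h : vK f < vK e) : vK (e + f) = vK f := by
  refine le_antisymm ?_ ?_
  · by_contra hlt
    push_neg at hlt
    have h3 := hvadd (e + f) (-e)
    rw [vK_neg hv0 hvmul, show e + f + -e = f by ring] at h3
    rcases min_le_iff.mp h3 with h4 | h4
    · exact absurd h4 (not_le.mpr hlt)
    · exact absurd h4 (not_le.mpr h)
  · calc vK f = min (vK e) (vK f) := (min_eq_right h.le).symm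
    _ ≤ vK (e + f) := hvadd e f

end vlems



section core

variable {K : Type*} [Field K] [CharP K p] {vK : K → WithTop ℝ}

theorem core
    (hv0 : ∀ a : K, vK a = ⊤ ↔ a = 0)
    (hvmul : ∀ a b : K, vK (a * b) = vK a + vK b)
    (hvadd : ∀ a b : K, min (vK a) (vK b) ≤ vK (a + b))
    (n : ℕ) (a b c : ℕ → K) (A B : WittVector p K)
    (hA : (p : 𝕎 K) ^ (n + 1) ∣
      (A - ∑ i ∈ Finset.range (n + 1), teichmuller p (a i) * (p : 𝕎 K) ^ i))
    (hB : (p : 𝕎 K) ^ (n + 1) ∣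
      (B - ∑ i ∈ Finset.range (n + 1), teichmuller p (b i) * (p : 𝕎 K) ^ i))
    (hS : (p : 𝕎 K) ^ (n + 1) ∣
      ((A + B) - ∑ i ∈ Finset.range (n + 1), teichmuller p (c i) * (p : 𝕎 K) ^ i))
    (ha : ∀ i ≤ n, 0 ≤ vK (a i)) (hb : ∀ i ≤ n, 0 ≤ vK (b i)) :
    (∀ j ≤ n, 0 ≤ vK (c j)) ∧
    (∀ j ≤ n, vK (a j) = 0 → (∀ i ≤ n, i ≠ j → 0 < vK (a i)) →
      (∀ i ≤ n, 0 < vK (b i)) → vK (c j) = 0) := by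
  have hvtop : vK 0 = ⊤ := (hv0 0).mpr rfl
  set R : Subring K :=
    { carrier := {u | 0 ≤ vK u}
      zero_mem' := by simp [hvtop]
      one_mem' := by simp [vK_one hv0 hvmul]
      add_mem' := fun hx hy => le_trans (le_min hx hy) (hvadd _ _)
      mul_mem' := fun {u w} hu hw => by
        show 0 ≤ vK (u * w)
        rw [hvmul]; exact add_nonneg hu hw
      neg_mem' := fun {u} hu => by
        show 0 ≤ vK (-u)
        rw [vK_neg hv0 hvmul]; exact hu } with hR
  haveI : CharP R p := RingHom.charP R.subtype Subtype.val_injective p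
  set a' : ℕ → R := fun i => if h : i ≤ n then ⟨a i, ha i h⟩ else 0 with ha'
  set b' : ℕ → R := fun i => if h : i ≤ n then ⟨b i, hb i h⟩ else 0 with hb'
  set X : 𝕎 R := ∑ i ∈ Finset.range (n + 1), teichmuller p (a' i) * (p : 𝕎 R) ^ i with hX
  set Y : 𝕎 R := ∑ i ∈ Finset.range (n + 1), teichmuller p (b' i) * (p : 𝕎 R) ^ i with hY
  have hmapX : WittVector.map R.subtype X =
      ∑ i ∈ Finset.range (n + 1), teichmuller p (a i) * (p : 𝕎 K) ^ i := by
    rw [hX, map_sum]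
    refine Finset.sum_congr rfl fun i hi => ?_
    have hin : i ≤ n := Nat.lt_succ_iff.mp (Finset.mem_range.mp hi)
    rw [map_mul, map_pow, map_natCast, map_teichmuller]
    congr 2
    simp [ha', hin]
  have hmapY : WittVector.map R.subtype Y =
      ∑ i ∈ Finset.range (n + 1), teichmuller p (b i) * (p : 𝕎 K) ^ i := by
    rw [hY, map_sum]
    refine Finset.sum_congr rfl fun i hi => ?_
    have hin : i ≤ n := Nat.lt_succ_iff.mp (Finset.mem_range.mp hi)
    rw [map_mul, map_pow, map_natCast, map_teichmuller]
    congr 2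
    simp [hb', hin]
  have hsum : (p : 𝕎 K) ^ (n + 1) ∣ (A + B) - WittVector.map R.subtype (X + Y) := by
    rw [map_add, hmapX, hmapY]
    have heq : (A + B) -
        ((∑ i ∈ Finset.range (n + 1), teichmuller p (a i) * (p : 𝕎 K) ^ i) +
         (∑ i ∈ Finset.range (n + 1), teichmuller p (b i) * (p : 𝕎 K) ^ i)) =
        (A - ∑ i ∈ Finset.range (n + 1), teichmuller p (a i) * (p : 𝕎 K) ^ i) +
        (B - ∑ i ∈ Finset.range (n + 1), teichmuller p (b i) * (p : 𝕎 K) ^ i) := by ring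
    rw [heq]
    exact dvd_add hA hB
  have hcS : ∀ j ≤ n, (A + B).coeff j = c j ^ p ^ j := coeff_of_expansion hS
  have hcXY : ∀ j ≤ n, c j ^ p ^ j = ((X + Y).coeff j : K) := by
    intro j hj
    rw [← hcS j hj, coeff_eq_of_dvd hsum j hj, map_coeff]
    rfl
  have hpj : ∀ j : ℕ, p ^ j ≠ 0 := fun j => pow_ne_zero j hp.out.ne_zero
  constructor
  · intro j hj
    by_contra hneg
    push_neg at hneg
    have h1 : vK (c j ^ p ^ j) < 0 := vK_pow_neg hvmul hneg (hpj j)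
    rw [hcXY j hj] at h1
    exact absurd ((X + Y).coeff j).2 (not_le.mpr h1)
  · intro j hj haj hsa hsb
    set m : Ideal R :=
      { carrier := {u | 0 < vK (u : K)}
        zero_mem' := by simp [hvtop]
        add_mem' := fun {u w} hu hw => lt_of_lt_of_le (lt_min hu hw) (hvadd _ _)
        smul_mem' := fun r u hu => by
          show 0 < vK ((r : K) * (u : K))
          rw [hvmul]
          exact lt_of_lt_of_le hu (le_add_of_nonneg_left r.2) } with hm
    have hmne : m ≠ ⊤ := by
      rw [Ideal.ne_top_iff_one]
      intro h1
      have : (0 : WithTop ℝ) < vK 1 := h1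
      rw [vK_one hv0 hvmul] at this
      exact lt_irrefl _ this
    haveI : Nontrivial (R ⧸ m) := Ideal.Quotient.nontrivial_iff.mpr hmne
    haveI : CharP (R ⧸ m) p := by
      refine (CharP.charP_iff_prime_eq_zero hp.out).mpr ?_
      rw [← map_natCast (Ideal.Quotient.mk m) p, CharP.cast_eq_zero R p, map_zero]
    set π := Ideal.Quotient.mk m with hπ
    have hmem : ∀ i ≤ n, i ≠ j → a' i ∈ m := fun i hi hij => by
      show (0 : WithTop ℝ) < vK ((a' i : R) : K)
      have hcoe : ((a' i : R) : K) = a i := by simp [ha', hi]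
      rw [hcoe]; exact hsa i hi hij
    have hmemb : ∀ i ≤ n, b' i ∈ m := fun i hi => by
      show (0 : WithTop ℝ) < vK ((b' i : R) : K)
      have hcoe : ((b' i : R) : K) = b i := by simp [hb', hi]
      rw [hcoe]; exact hsb i hi
    have hYm : WittVector.map π Y = 0 := by
      rw [hY, map_sum]
      refine Finset.sum_eq_zero fun i hi => ?_
      have hin : i ≤ n := Nat.lt_succ_iff.mp (Finset.mem_range.mp hi)
      rw [map_mul, map_teichmuller, Ideal.Quotient.eq_zero_iff_mem.mpr (hmemb i hin),
        teichmuller_zero, zero_mul]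
    have hXm : WittVector.map π X = teichmuller p (π (a' j)) * (p : 𝕎 (R ⧸ m)) ^ j := by
      rw [hX, map_sum]
      rw [Finset.sum_eq_single j]
      · rw [map_mul, map_teichmuller, map_pow, map_natCast]
      · intro i hi hij
        have hin : i ≤ n := Nat.lt_succ_iff.mp (Finset.mem_range.mp hi)
        rw [map_mul, map_teichmuller, Ideal.Quotient.eq_zero_iff_mem.mpr (hmem i hin hij),
          teichmuller_zero, zero_mul]
      · intro hj'
        exact absurd (Finset.mem_range.mpr (Nat.lt_succ_of_le hj)) hj'
    have hco : π ((X + Y).coeff j) = π (a' j ^ p ^ j) := by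
      have h1 : WittVector.map π (X + Y) = teichmuller p (π (a' j)) * (p : 𝕎 (R ⧸ m)) ^ j := by
        rw [map_add, hXm, hYm, add_zero]
      have h2 := congrArg (fun w => WittVector.coeff w j) h1
      simp only [map_coeff] at h2
      rw [h2, teich_mul_p_pow, coeff_iterate_verschiebung_teich, if_pos rfl, map_pow]
    have hdiff : (X + Y).coeff j - a' j ^ p ^ j ∈ m :=
      Ideal.Quotient.eq.mp hco
    have hdiffK : 0 < vK (((X + Y).coeff j : K) - (a j) ^ p ^ j) := by
      have h3 : (((X + Y).coeff j - a' j ^ p ^ j : R) : K)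
          = ((X + Y).coeff j : K) - (a j) ^ p ^ j := by
        push_cast
        congr 2
        simp [ha', hj]
      have := hdiff
      rw [hm] at this
      simpa [h3] using this
    have hapj : vK ((a j) ^ p ^ j) = 0 := vK_pow_eq_zero hv0 hvmul haj _
    have hcj : vK (c j ^ p ^ j) = 0 := by
      rw [hcXY j hj]
      have heq2 : ((X + Y).coeff j : K)
          = (((X + Y).coeff j : K) - (a j) ^ p ^ j) + (a j) ^ p ^ j := by ring
      rw [heq2, vK_add_eq hv0 hvmul hvadd (by rw [hapj]; exact hdiffK), hapj]
    rcases lt_trichotomy (vK (c j)) 0 with h | h | h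
    · exact absurd hcj (ne_of_lt (vK_pow_neg hvmul h (hpj j)))
    · exact h
    · exact absurd hcj (ne_of_gt (vK_pow_pos hv0 hvmul h (hpj j)))


end core

section aux
variable {K : Type*} [Field K] [CharP K p] {vK : K → WithTop ℝ}

theorem aux
    (hv0 : ∀ a : K, vK a = ⊤ ↔ a = 0)
    (hvmul : ∀ a b : K, vK (a * b) = vK a + vK b)
    (hvadd : ∀ a b : K, min (vK a) (vK b) ≤ vK (a + b))
    (x y : 𝕎 K) (zx zy zs : ℕ → K) (n : ℕ)
    (hx : (p : 𝕎 K) ^ (n + 1) ∣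
      (x - ∑ i ∈ Finset.range (n + 1), teichmuller p (zx i) * (p : 𝕎 K) ^ i))
    (hy : (p : 𝕎 K) ^ (n + 1) ∣
      (y - ∑ i ∈ Finset.range (n + 1), teichmuller p (zy i) * (p : 𝕎 K) ^ i))
    (hs : (p : 𝕎 K) ^ (n + 1) ∣
      ((x + y) - ∑ i ∈ Finset.range (n + 1), teichmuller p (zs i) * (p : 𝕎 K) ^ i))
    {u : K} (hu0 : u ≠ 0)
    (hax : ∀ i ≤ n, vK u ≤ vK (zx i)) (hay : ∀ i ≤ n, vK u ≤ vK (zy i)) :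
    (∀ j ≤ n, vK u ≤ vK (zs j)) ∧
    (∀ j ≤ n, vK (zx j) = vK u → (∀ i ≤ n, i ≠ j → vK u < vK (zx i)) →
      (∀ i ≤ n, vK u < vK (zy i)) → vK (zs j) = vK u) := by
  have hune : vK u ≠ ⊤ := fun h => hu0 ((hv0 u).mp h)
  obtain ⟨r, hr⟩ := WithTop.ne_top_iff_exists.mp hune
  have hu0' : u⁻¹ ≠ 0 := inv_ne_zero hu0
  have hune' : vK u⁻¹ ≠ ⊤ := fun h => hu0' ((hv0 _).mp h)
  obtain ⟨r', hr'⟩ := WithTop.ne_top_iff_exists.mp hune'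
  have hrr' : r' = -r := by
    have h := hvmul u u⁻¹
    rw [mul_inv_cancel₀ hu0, vK_one hv0 hvmul, ← hr, ← hr'] at h
    norm_cast at h
    linarith
  subst hrr'
  have key : ∀ t : K, vK (u⁻¹ * t) = ((-r : ℝ) : WithTop ℝ) + vK t := fun t => by
    rw [hvmul, ← hr']
  have h0le : ∀ w : WithTop ℝ, 0 ≤ ((-r : ℝ) : WithTop ℝ) + w ↔ (r : WithTop ℝ) ≤ w := by
    intro w
    induction w using WithTop.recTopCoe with
    | top => simp
    | coe w => norm_cast; constructor <;> intro <;> linarith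
  have h0lt : ∀ w : WithTop ℝ, 0 < ((-r : ℝ) : WithTop ℝ) + w ↔ (r : WithTop ℝ) < w := by
    intro w
    induction w using WithTop.recTopCoe with
    | top => simp [WithTop.add_top, WithTop.coe_lt_top]
    | coe w => norm_cast; constructor <;> intro <;> linarith
  have h0eq : ∀ w : WithTop ℝ, ((-r : ℝ) : WithTop ℝ) + w = 0 ↔ w = (r : WithTop ℝ) := by
    intro w
    induction w using WithTop.recTopCoe with
    | top => simp [WithTop.add_top]
    | coe w => norm_cast; constructor <;> intro <;> linarith
  -- scaled data
  set A : 𝕎 K := teichmuller p u⁻¹ * x with hA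
  set B : 𝕎 K := teichmuller p u⁻¹ * y with hB
  have hsum_scale : ∀ z : ℕ → K,
      (∑ i ∈ Finset.range (n + 1), teichmuller p (u⁻¹ * z i) * (p : 𝕎 K) ^ i)
        = teichmuller p u⁻¹ *
          ∑ i ∈ Finset.range (n + 1), teichmuller p (z i) * (p : 𝕎 K) ^ i := by
    intro z
    rw [Finset.mul_sum]
    refine Finset.sum_congr rfl fun i _ => ?_
    rw [map_mul, mul_assoc]
  have hdvd_scale : ∀ (w : 𝕎 K) (z : ℕ → K),
      ((p : 𝕎 K) ^ (n + 1) ∣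
        (w - ∑ i ∈ Finset.range (n + 1), teichmuller p (z i) * (p : 𝕎 K) ^ i)) →
      ((p : 𝕎 K) ^ (n + 1) ∣
        (teichmuller p u⁻¹ * w -
          ∑ i ∈ Finset.range (n + 1), teichmuller p (u⁻¹ * z i) * (p : 𝕎 K) ^ i)) := by
    intro w z h
    rw [hsum_scale, ← mul_sub]
    exact Dvd.dvd.mul_left h _
  have hAB : A + B = teichmuller p u⁻¹ * (x + y) := by rw [hA, hB, mul_add]
  have hcore := core hv0 hvmul hvadd n
    (fun i => u⁻¹ * zx i) (fun i => u⁻¹ * zy i) (fun i => u⁻¹ * zs i) A B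
    (hdvd_scale x zx hx) (hdvd_scale y zy hy)
    (by rw [hAB]; exact hdvd_scale (x + y) zs hs)
    (fun i hi => by rw [key]; exact (h0le _).mpr (hr ▸ hax i hi))
    (fun i hi => by rw [key]; exact (h0le _).mpr (hr ▸ hay i hi))
  constructor
  · intro j hj
    have := hcore.1 j hj
    rw [key] at this
    rw [← hr]
    exact (h0le _).mp this
  · intro j hj hja hstra hstrb
    have := hcore.2 j hj
      (by rw [key, h0eq]; exact hja.trans hr.symm)
      (fun i hi hij => by rw [key, h0lt, hr]; exact hstra i hi hij)
      (fun i hi => by rw [key, h0lt, hr]; exact hstrb i hi)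
    rw [key, h0eq, hr] at this
    exact this

end aux



end WittAux

/-- For Witt vectors over a perfect field `K` of characteristic `p` with a valuation `v_K`,
the partial valuations satisfy `v_n(x + y) ≥ min (v_n x, v_n y)`, with equality if the
minimum is achieved exactly once (among the Teichmüller coordinates of `x` and `y` in
degrees `≤ n`). -/
theorem partialVal_add (p : ℕ) [Fact p.Prime] {K : Type*} [Field K] [CharP K p]
    [PerfectRing K p]
    (vK : K → WithTop ℝ)
    (hv0 : ∀ a : K, vK a = ⊤ ↔ a = 0)
    (hvmul : ∀ a b : K, vK (a * b) = vK a + vK b)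
    (hvadd : ∀ a b : K, min (vK a) (vK b) ≤ vK (a + b))
    (x y : WittVector p K) (zx zy zs : ℕ → K)
    (hx : IsTeichmullerExpansion p zx x)
    (hy : IsTeichmullerExpansion p zy y)
    (hs : IsTeichmullerExpansion p zs (x + y)) (n : ℕ) :
    min (partialVal vK zx n) (partialVal vK zy n) ≤ partialVal vK zs n ∧
    ((∃! wit : Bool × ℕ, wit.2 ≤ n ∧
        vK ((if wit.1 then zx else zy) wit.2) =
          min (partialVal vK zx n) (partialVal vK zy n)) →
      partialVal vK zs n = min (partialVal vK zx n) (partialVal vK zy n)) := by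
  classical
  set Px := partialVal vK zx n with hPx
  set Py := partialVal vK zy n with hPy
  set c := min Px Py with hc
  have hcx : ∀ i ≤ n, c ≤ vK (zx i) := fun i hi =>
    le_trans (min_le_left _ _) (WittAux.partialVal_le vK zx hi)
  have hcy : ∀ i ≤ n, c ≤ vK (zy i) := fun i hi =>
    le_trans (min_le_right _ _) (WittAux.partialVal_le vK zy hi)
  by_cases hc_top : c = ⊤
  · -- degenerate case: all coordinates of `x` and `y` vanish up to level `n`
    have hzx0 : ∀ i ≤ n, zx i = 0 := fun i hi =>
      (hv0 _).mp (top_le_iff.mp (hc_top ▸ hcx i hi))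
    have hzy0 : ∀ i ≤ n, zy i = 0 := fun i hi =>
      (hv0 _).mp (top_le_iff.mp (hc_top ▸ hcy i hi))
    have hSx : ∑ i ∈ Finset.range (n + 1),
        WittVector.teichmuller p (zx i) * (p : WittVector p K) ^ i = 0 :=
      Finset.sum_eq_zero fun i hi => by
        rw [hzx0 i (Nat.lt_succ_iff.mp (Finset.mem_range.mp hi)),
          WittVector.teichmuller_zero, zero_mul]
    have hSy : ∑ i ∈ Finset.range (n + 1),
        WittVector.teichmuller p (zy i) * (p : WittVector p K) ^ i = 0 :=
      Finset.sum_eq_zero fun i hi => by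
        rw [hzy0 i (Nat.lt_succ_iff.mp (Finset.mem_range.mp hi)),
          WittVector.teichmuller_zero, zero_mul]
    have hdvd : (p : WittVector p K) ^ (n + 1) ∣
        ((x + y) - ∑ i ∈ Finset.range (n + 1),
          WittVector.teichmuller p ((fun _ => (0 : K)) i) * (p : WittVector p K) ^ i) := by
      have h1 := hx n
      have h2 := hy n
      rw [hSx, sub_zero] at h1
      rw [hSy, sub_zero] at h2
      have h0 : ∑ i ∈ Finset.range (n + 1),
          WittVector.teichmuller p ((fun _ => (0 : K)) i) * (p : WittVector p K) ^ i = 0 :=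
        Finset.sum_eq_zero fun i _ => by rw [WittVector.teichmuller_zero, zero_mul]
      rw [h0, sub_zero]
      exact dvd_add h1 h2
    have hppow : p ^ 0 ≠ 0 := one_ne_zero
    have hzs0 : ∀ j ≤ n, zs j = 0 := by
      intro j hj
      have e1 := WittAux.coeff_of_expansion (hs n) j hj
      have e2 := WittAux.coeff_of_expansion hdvd j hj
      rw [e1] at e2
      rw [zero_pow (pow_ne_zero j (Fact.out (p := p.Prime)).ne_zero)] at e2
      exact pow_eq_zero_iff (pow_ne_zero j (Fact.out (p := p.Prime)).ne_zero) |>.mp e2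
    have hPs : partialVal vK zs n = ⊤ :=
      le_antisymm le_top
        (WittAux.le_partialVal vK zs fun i hi => le_of_eq ((hv0 _).mpr (hzs0 i hi)).symm)
    exact ⟨by rw [hPs]; exact le_top, fun _ => by rw [hPs, hc_top]⟩
  · -- main case
    have hexists : ∃ u : K, u ≠ 0 ∧ vK u = c := by
      obtain ⟨i, hi, hieq⟩ := Finset.exists_mem_eq_inf (Finset.range (n + 1))
        (Finset.nonempty_range_iff.mpr (Nat.succ_ne_zero n)) (fun i => vK (zx i))
      obtain ⟨i', hi', hieq'⟩ := Finset.exists_mem_eq_inf (Finset.range (n + 1))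
        (Finset.nonempty_range_iff.mpr (Nat.succ_ne_zero n)) (fun i => vK (zy i))
      rcases min_cases Px Py with ⟨h1, _⟩ | ⟨h1, _⟩
      · refine ⟨zx i, ?_, ?_⟩
        · intro h0
          exact hc_top (by rw [hc, h1, hPx]; rw [partialVal, hieq, h0, (hv0 0).mpr rfl])
        · rw [hc, h1, hPx, partialVal, hieq]
      · refine ⟨zy i', ?_, ?_⟩
        · intro h0
          exact hc_top (by rw [hc, h1, hPy]; rw [partialVal, hieq', h0, (hv0 0).mpr rfl])
        · rw [hc, h1, hPy, partialVal, hieq']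
    obtain ⟨u, hu0, hu⟩ := hexists
    have haux := WittAux.aux hv0 hvmul hvadd x y zx zy zs n (hx n) (hy n) (hs n) hu0
      (fun i hi => hu ▸ hcx i hi) (fun i hi => hu ▸ hcy i hi)
    have part1 : c ≤ partialVal vK zs n :=
      WittAux.le_partialVal vK zs fun j hj => hu ▸ haux.1 j hj
    refine ⟨part1, ?_⟩
    rintro ⟨⟨s, j⟩, ⟨hjle, hjeq⟩, huniq⟩
    have hstrict : ∀ (s' : Bool) (i : ℕ), i ≤ n → (s', i) ≠ (s, j) →
        c < vK ((if s' then zx else zy) i) := by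
      intro s' i hi hne
      have hge : c ≤ vK ((if s' then zx else zy) i) := by
        cases s'
        · simpa using hcy i hi
        · simpa using hcx i hi
      rcases hge.lt_or_eq with h | h
      · exact h
      · exact absurd (huniq (s', i) ⟨hi, h.symm⟩) hne
    have hkey : ∃ j', j' ≤ n ∧ vK (zs j') = c := by
      cases s with
      | true =>
          simp only [if_true] at hjeq
          have hu'0 : zx j ≠ 0 := fun h0 =>
            hc_top (by rw [← hjeq, h0, (hv0 0).mpr rfl])
          have h2 := (WittAux.aux hv0 hvmul hvadd x y zx zy zs n (hx n) (hy n) (hs n) hu'0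
            (fun i hi => hjeq ▸ hcx i hi) (fun i hi => hjeq ▸ hcy i hi)).2 j hjle rfl
            (fun i hi hij => hjeq ▸ hstrict true i hi (by simp [hij]))
            (fun i hi => hjeq ▸ hstrict false i hi (by simp))
          exact ⟨j, hjle, h2.trans hjeq⟩
      | false =>
          simp only [Bool.false_eq_true, if_false] at hjeq
          have hu'0 : zy j ≠ 0 := fun h0 =>
            hc_top (by rw [← hjeq, h0, (hv0 0).mpr rfl])
          have hs' : (p : WittVector p K) ^ (n + 1) ∣
              ((y + x) - ∑ i ∈ Finset.range (n + 1),
                WittVector.teichmuller p (zs i) * (p : WittVector p K) ^ i) := by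
            rw [add_comm y x]; exact hs n
          have h2 := (WittAux.aux hv0 hvmul hvadd y x zy zx zs n (hy n) (hx n) hs' hu'0
            (fun i hi => hjeq ▸ hcy i hi) (fun i hi => hjeq ▸ hcx i hi)).2 j hjle rfl
            (fun i hi hij => hjeq ▸ hstrict false i hi (by simp [hij]))
            (fun i hi => hjeq ▸ hstrict true i hi (by simp))
          exact ⟨j, hjle, h2.trans hjeq⟩
    obtain ⟨j', hj'le, hj'⟩ := hkey
    exact le_antisymm (hj' ▸ WittAux.partialVal_le vK zs hj'le) part1
end

section
/- Let k((t^ℚ)) denote the Hahn (Mal'cev–Neumann) field of generalized power series Σ_{i∈ℚ} c_i t^i with coefficients in a field k and well-ordered support. If k is algebraically closed of characteristic p > 0, then k((t^ℚ)) is algebraically closed. -/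
open Polynomial
open scoped Classical

namespace HahnAC

variable {k : Type*} [Field k]



/-- `lb x q` means every coefficient of `x` below `q` vanishes, i.e. `v(x) ≥ q`. -/
def lb (x : HahnSeries ℚ k) (q : ℚ) : Prop := ∀ r < q, x.coeff r = 0

lemma lb_zero (q : ℚ) : lb (0 : HahnSeries ℚ k) q := fun _ _ => rfl

lemma lb.mono {x : HahnSeries ℚ k} {q q' : ℚ} (h : lb x q) (hq : q' ≤ q) : lb x q' :=
  fun r hr => h r (lt_of_lt_of_le hr hq)

lemma lb.add {x y : HahnSeries ℚ k} {q : ℚ} (hx : lb x q) (hy : lb y q) : lb (x + y) q := by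
  intro r hr; rw [HahnSeries.coeff_add, hx r hr, hy r hr, add_zero]

lemma lb.neg {x : HahnSeries ℚ k} {q : ℚ} (hx : lb x q) : lb (-x) q := by
  intro r hr; rw [HahnSeries.coeff_neg, hx r hr, neg_zero]

lemma lb.sub {x y : HahnSeries ℚ k} {q : ℚ} (hx : lb x q) (hy : lb y q) : lb (x - y) q := by
  rw [sub_eq_add_neg]; exact hx.add hy.neg

lemma lb_order (x : HahnSeries ℚ k) : lb x x.order := by
  intro r hr
  by_cases hx : x = 0
  · simp [hx]
  · by_contra h
    exact (not_lt_of_ge (HahnSeries.order_le_of_coeff_ne_zero h)) hr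

lemma lb.order_le {x : HahnSeries ℚ k} {q : ℚ} (hx : x ≠ 0) (h : lb x q) : q ≤ x.order := by
  by_contra hlt
  exact (mt HahnSeries.coeff_order_eq_zero.1 hx) (h _ (not_le.1 hlt))

lemma order_eq_of_lb {x : HahnSeries ℚ k} {q : ℚ} (h : lb x q) (hc : x.coeff q ≠ 0) :
    x ≠ 0 ∧ x.order = q := by
  have hx : x ≠ 0 := HahnSeries.ne_zero_of_coeff_ne_zero hc
  refine ⟨hx, le_antisymm (HahnSeries.order_le_of_coeff_ne_zero hc) (h.order_le hx)⟩

lemma coeff_eq_zero_of_lt_order {x : HahnSeries ℚ k} {q : ℚ} (h : q < x.order) : x.coeff q = 0 :=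
  lb_order x q h

lemma lb.mul {x y : HahnSeries ℚ k} {q r : ℚ} (hx : lb x q) (hy : lb y r) : lb (x * y) (q + r) := by
  intro s hs
  rw [HahnSeries.coeff_mul]
  refine Finset.sum_eq_zero fun ij hij => ?_
  rw [Finset.mem_addAntidiagonal] at hij
  rcases lt_or_ge ij.1 q with h1 | h1
  · rw [hx _ h1, zero_mul]
  · have : ij.2 < r := by
      have := hij.2.2; nlinarith [hij.2.2]
    rw [hy _ this, mul_zero]

lemma mul_coeff_of_lb {x y : HahnSeries ℚ k} {q r : ℚ} (hx : lb x q) (hy : lb y r) :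
    (x * y).coeff (q + r) = x.coeff q * y.coeff r := by
  rw [HahnSeries.coeff_mul]
  rcases Finset.decidableMem (q, r)
      (Finset.antidiagonal x.isPWO_support y.isPWO_support (q + r)) with hmem | hmem
  · -- (q, r) not in the antidiagonal: both sides are zero
    rw [Finset.sum_eq_zero, eq_comm]
    · rw [Finset.mem_addAntidiagonal] at hmem
      push_neg at hmem
      by_cases h1 : x.coeff q = 0
      · rw [h1, zero_mul]
      · by_cases h2 : y.coeff r = 0
        · rw [h2, mul_zero]
        · exact absurd rfl (hmem h1 h2)
    · intro ij hij
      rw [Finset.mem_addAntidiagonal] at hij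
      rcases lt_trichotomy ij.1 q with h1 | h1 | h1
      · rw [hx _ h1, zero_mul]
      · exfalso
        rw [Finset.mem_addAntidiagonal] at hmem
        have : ij.2 = r := by have := hij.2.2; rw [h1] at this; linarith
        exact hmem ⟨by simpa [← h1] using hij.1, by simpa [← this] using hij.2.1, rfl⟩
      · have : ij.2 < r := by have := hij.2.2; linarith
        rw [hy _ this, mul_zero]
  · rw [Finset.sum_eq_single_of_mem (q, r) hmem]
    intro ij hij hne
    rw [Finset.mem_addAntidiagonal] at hij
    rcases lt_trichotomy ij.1 q with h1 | h1 | h1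
    · rw [hx _ h1, zero_mul]
    · exfalso
      apply hne
      have : ij.2 = r := by have := hij.2.2; rw [h1] at this; linarith
      exact Prod.ext h1 this
    · have : ij.2 < r := by have := hij.2.2; linarith
      rw [hy _ this, mul_zero]

lemma lb.pow {w : HahnSeries ℚ k} {γ : ℚ} (hw : lb w γ) (i : ℕ) : lb (w ^ i) (i * γ) := by
  induction i with
  | zero =>
    intro r hr
    rw [pow_zero]
    have : r < 0 := by push_cast at hr; linarith
    rw [HahnSeries.coeff_one, if_neg (by exact fun h => by simp [h] at this)]
  | succ i ih =>
    have : ((i + 1 : ℕ) : ℚ) * γ = i * γ + γ := by push_cast; ring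
    rw [pow_succ, this]
    exact ih.mul hw

lemma pow_coeff_of_lb {w : HahnSeries ℚ k} {γ : ℚ} (hw : lb w γ) (i : ℕ) :
    (w ^ i).coeff (i * γ) = (w.coeff γ) ^ i := by
  induction i with
  | zero => simp [HahnSeries.coeff_one]
  | succ i ih =>
    have h1 : ((i + 1 : ℕ) : ℚ) * γ = i * γ + γ := by push_cast; ring
    rw [pow_succ, pow_succ, h1, mul_coeff_of_lb (hw.pow i) hw, ih]

lemma sum_coeff {ι : Type*} (s : Finset ι) (F : ι → HahnSeries ℚ k) (q : ℚ) :
    (∑ i ∈ s, F i).coeff q = ∑ i ∈ s, (F i).coeff q := by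
  classical
  induction s using Finset.induction with
  | empty => simp
  | @insert _ _ h ih => rw [Finset.sum_insert h, Finset.sum_insert h, HahnSeries.coeff_add, ih]

lemma lb.finsum {ι : Type*} {s : Finset ι} {F : ι → HahnSeries ℚ k} {q : ℚ}
    (h : ∀ i ∈ s, lb (F i) q) : lb (∑ i ∈ s, F i) q := by
  intro r hr
  rw [sum_coeff]
  exact Finset.sum_eq_zero fun i hi => h i hi r hr

lemma lb.natCast_mul {y : HahnSeries ℚ k} {q : ℚ} (m : ℕ) (hy : lb y q) : lb ((m : HahnSeries ℚ k) * y) q := by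
  intro r hr
  rw [← nsmul_eq_mul, HahnSeries.coeff_nsmul]
  simp [hy r hr]

lemma natCast_mul_coeff {y : HahnSeries ℚ k} (m : ℕ) (q : ℚ) :
    ((m : HahnSeries ℚ k) * y).coeff q = (m : k) * y.coeff q := by
  rw [← nsmul_eq_mul, HahnSeries.coeff_nsmul]
  simp [nsmul_eq_mul]

end HahnAC

namespace HahnAC

variable {k : Type*} [Field k]



variable (f : Polynomial (HahnSeries ℚ k))

/-- order of `f(a)` -/
noncomputable def va (a : HahnSeries ℚ k) : ℚ := (f.eval a).order

/-- Taylor coefficients of `f` at `a` -/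
noncomputable def cf (i : ℕ) (a : HahnSeries ℚ k) : HahnSeries ℚ k := (taylor a f).coeff i

/-- critical index set -/
noncomputable def crit (a : HahnSeries ℚ k) : Finset ℕ :=
  (Finset.Icc 1 f.natDegree).filter (fun i => cf f i a ≠ 0)

/-- the Newton slope at `a` : the largest slope of the Newton polygon of `f(a + X)` -/
noncomputable def slope (a : HahnSeries ℚ k) : ℚ :=
  if h : (crit f a).Nonempty then
    (crit f a).sup' h (fun i => (va f a - (cf f i a).order) / i) else 0

/-- residue coefficients -/
noncomputable def dcoef (a : HahnSeries ℚ k) (j : ℕ) : k :=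
  (cf f j a).coeff (va f a - j * slope f a)

/-- the residue polynomial over `k` -/
noncomputable def Qp (a : HahnSeries ℚ k) : Polynomial k :=
  ∑ j ∈ Finset.range (f.natDegree + 1), C (dcoef f a j) * X ^ j

variable {f}

section Facts

variable {a : HahnSeries ℚ k}

lemma cf_natDegree_ne_zero (hn : 0 < f.natDegree) : cf f f.natDegree a ≠ 0 := by
  have hf : f ≠ 0 := fun h => by simp [h] at hn
  have ht : taylor a f ≠ 0 := fun h => hf (taylor_injective a (by rw [h, map_zero]))
  have : (taylor a f).natDegree = f.natDegree := natDegree_taylor f a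
  rw [cf, ← this]
  exact mt leadingCoeff_eq_zero.mp ht

lemma crit_nonempty (hn : 0 < f.natDegree) : (crit f a).Nonempty := by
  exact ⟨f.natDegree, Finset.mem_filter.2 ⟨Finset.mem_Icc.2 ⟨hn, le_refl _⟩,
    cf_natDegree_ne_zero hn⟩⟩

lemma slope_eq (hn : 0 < f.natDegree) : slope f a =
    (crit f a).sup' (crit_nonempty hn) (fun i => (va f a - (cf f i a).order) / i) := by
  rw [slope, dif_pos (crit_nonempty hn)]

lemma ratio_le_slope (hn : 0 < f.natDegree) {i : ℕ} (hi : i ∈ crit f a) :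
    (va f a - (cf f i a).order) / i ≤ slope f a := by
  rw [slope_eq hn]; exact Finset.le_sup' (fun i : ℕ => (va f a - (cf f i a).order) / (i:ℚ)) hi

lemma cf_eq_zero_of_gt {m : ℕ} (hm : f.natDegree < m) : cf f m a = 0 := by
  rw [cf]
  exact coeff_eq_zero_of_natDegree_lt (by rwa [natDegree_taylor])

lemma lb_cf (hn : 0 < f.natDegree) (hfa : f.eval a ≠ 0) (j : ℕ) :
    lb (cf f j a) (va f a - j * slope f a) := by
  rcases Nat.eq_zero_or_pos j with rfl | hj
  · simp only [Nat.cast_zero, zero_mul, sub_zero]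
    have : cf f 0 a = f.eval a := taylor_coeff_zero a f
    rw [this, va]; exact lb_order _
  rcases le_or_gt j f.natDegree with hjn | hjn
  · by_cases hcj : cf f j a = 0
    · rw [hcj]; exact lb_zero _
    · have hcrit : j ∈ crit f a := Finset.mem_filter.2 ⟨Finset.mem_Icc.2 ⟨hj, hjn⟩, hcj⟩
      have h1 : (va f a - (cf f j a).order) / j ≤ slope f a := ratio_le_slope hn hcrit
      have hj1 : (1 : ℚ) ≤ j := by exact_mod_cast hj
      have : va f a - j * slope f a ≤ (cf f j a).order := by
        rw [div_le_iff₀ (by linarith)] at h1; linarith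
      exact (lb_order _).mono this
  · rw [cf_eq_zero_of_gt hjn]; exact lb_zero _

lemma dcoef_zero_ne (hfa : f.eval a ≠ 0) : dcoef f a 0 ≠ 0 := by
  rw [dcoef]
  simp only [Nat.cast_zero, zero_mul, sub_zero]
  have : cf f 0 a = f.eval a := taylor_coeff_zero a f
  rw [this, va]
  exact mt HahnSeries.coeff_order_eq_zero.1 hfa

lemma exists_dcoef_ne (hn : 0 < f.natDegree) (hfa : f.eval a ≠ 0) :
    ∃ i, 1 ≤ i ∧ i ≤ f.natDegree ∧ dcoef f a i ≠ 0 := by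
  obtain ⟨i, hi, hs⟩ := Finset.exists_mem_eq_sup' (crit_nonempty hn)
    (fun i => (va f a - (cf f i a).order) / i)
  have hmem := Finset.mem_filter.1 hi
  have h1 : 1 ≤ i := (Finset.mem_Icc.1 hmem.1).1
  have hcj := hmem.2
  refine ⟨i, h1, (Finset.mem_Icc.1 hmem.1).2, ?_⟩
  have hj1 : (1 : ℚ) ≤ i := by exact_mod_cast h1
  have hord : (cf f i a).order = va f a - i * slope f a := by
    have : slope f a = (va f a - (cf f i a).order) / i := by rw [slope_eq hn, hs]
    field_simp at this; linarith
  rw [dcoef, ← hord]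
  exact mt HahnSeries.coeff_order_eq_zero.1 hcj

lemma dcoef_eq_zero_of_gt {m : ℕ} (hm : f.natDegree < m) : dcoef f a m = 0 := by
  rw [dcoef, cf_eq_zero_of_gt hm]; rfl

lemma Qp_coeff (m : ℕ) : (Qp f a).coeff m = dcoef f a m := by
  rw [Qp, finset_sum_coeff]
  simp only [coeff_C_mul, coeff_X_pow, mul_ite, mul_one, mul_zero]
  rw [Finset.sum_ite_eq (Finset.range (f.natDegree + 1)) m (fun j => dcoef f a j)]
  split_ifs with h
  · rfl
  · rw [eq_comm]
    exact dcoef_eq_zero_of_gt (by simp only [Finset.mem_range] at h; omega)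

lemma natDegree_Qp_le : (Qp f a).natDegree ≤ f.natDegree := by
  apply natDegree_le_iff_coeff_eq_zero.2
  intro m hm
  rw [Qp_coeff]
  exact dcoef_eq_zero_of_gt hm

end Facts

end HahnAC

namespace HahnAC

variable {k : Type*} [Field k]
variable {f : Polynomial (HahnSeries ℚ k)} {a w : HahnSeries ℚ k}

lemma central_sum (i : ℕ) :
    (taylor (w + a) f).coeff i =
      ∑ l ∈ Finset.range (f.natDegree + 1),
        ((l + i).choose i : HahnSeries ℚ k) * cf f (l + i) a * w ^ l := by
  have h1 : taylor (w + a) f = taylor w (taylor a f) := (taylor_taylor f w a).symm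
  rw [h1, taylor_coeff]
  have hdeg : (hasseDeriv i (taylor a f)).natDegree < f.natDegree + 1 :=
    lt_of_le_of_lt (le_trans (natDegree_hasseDeriv_le _ i)
      (by rw [natDegree_taylor]; omega)) (Nat.lt_succ_self _)
  rw [eval_eq_sum_range' hdeg]
  refine Finset.sum_congr rfl fun l _ => ?_
  rw [hasseDeriv_coeff]
  rfl

lemma eval_hasse_Qp (i : ℕ) (u : k) :
    (hasseDeriv i (Qp f a)).eval u =
      ∑ l ∈ Finset.range (f.natDegree + 1),
        ((l + i).choose i : k) * dcoef f a (l + i) * u ^ l := by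
  have hdeg : (hasseDeriv i (Qp f a)).natDegree < f.natDegree + 1 :=
    lt_of_le_of_lt (le_trans (natDegree_hasseDeriv_le _ i)
      (le_trans (Nat.sub_le _ _) natDegree_Qp_le)) (Nat.lt_succ_self _)
  rw [eval_eq_sum_range' hdeg]
  refine Finset.sum_congr rfl fun l _ => ?_
  rw [hasseDeriv_coeff, Qp_coeff]

lemma central_lb (hn : 0 < f.natDegree) (hfa : f.eval a ≠ 0)
    (hw : lb w (slope f a)) (i : ℕ) :
    lb ((taylor (w + a) f).coeff i) (va f a - i * slope f a) := by
  rw [central_sum i]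
  refine lb.finsum fun l _ => ?_
  have h1 : lb (cf f (l + i) a * w ^ l)
      ((va f a - ((l + i : ℕ) : ℚ) * slope f a) + (l : ℚ) * slope f a) :=
    (lb_cf hn hfa (l + i)).mul (hw.pow l)
  have h2 : (va f a - ((l + i : ℕ) : ℚ) * slope f a) + (l : ℚ) * slope f a
      = va f a - (i : ℚ) * slope f a := by push_cast; ring
  rw [mul_assoc]
  refine (lb.natCast_mul _ h1).mono (le_of_eq ?_)
  push_cast
  ring

lemma central_coeff (hn : 0 < f.natDegree) (hfa : f.eval a ≠ 0)
    (hw : lb w (slope f a)) (i : ℕ) :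
    ((taylor (w + a) f).coeff i).coeff (va f a - i * slope f a)
      = (hasseDeriv i (Qp f a)).eval (w.coeff (slope f a)) := by
  rw [central_sum i, eval_hasse_Qp, sum_coeff]
  refine Finset.sum_congr rfl fun l _ => ?_
  have h2 : va f a - (i : ℚ) * slope f a
      = (va f a - ((l + i : ℕ) : ℚ) * slope f a) + (l : ℚ) * slope f a := by push_cast; ring
  rw [mul_assoc, h2, natCast_mul_coeff,
    mul_coeff_of_lb (lb_cf hn hfa (l + i)) (hw.pow l), pow_coeff_of_lb hw, mul_assoc]
  rfl

lemma eval_lb (hn : 0 < f.natDegree) (hfa : f.eval a ≠ 0)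
    (hw : lb w (slope f a)) : lb (f.eval (w + a)) (va f a) := by
  have := central_lb hn hfa hw 0
  rw [taylor_coeff_zero] at this
  simpa using this

lemma eval_coeff (hn : 0 < f.natDegree) (hfa : f.eval a ≠ 0)
    (hw : lb w (slope f a)) :
    (f.eval (w + a)).coeff (va f a) = (Qp f a).eval (w.coeff (slope f a)) := by
  have := central_coeff hn hfa hw 0
  rw [taylor_coeff_zero, hasseDeriv_zero'] at this
  simpa using this

end HahnAC

namespace HahnAC

variable {k : Type*} [Field k]
variable {f : Polynomial (HahnSeries ℚ k)} {a b : HahnSeries ℚ k}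

lemma taylor_u_coeff_rootMult {Q : Polynomial k} (hQ : Q ≠ 0) {u : k}
    (hu : Q.IsRoot u) : (hasseDeriv (rootMultiplicity u Q) Q).eval u ≠ 0 := by
  set μ := rootMultiplicity u Q
  obtain ⟨R, hR, hnd⟩ := exists_eq_pow_rootMultiplicity_mul_and_not_dvd Q hQ u
  have hRu : R.eval u ≠ 0 := fun h => hnd (dvd_iff_isRoot.2 h)
  have h1 : (hasseDeriv μ Q).eval u = (taylor u Q).coeff μ := (taylor_coeff u Q μ).symm
  have h2 : taylor u Q = X ^ μ * taylor u R := by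
    rw [hR, taylor_mul]
    congr 1
    have : ((X - C u) ^ μ : Polynomial k) = (X - C u) ^ μ := rfl
    calc taylor u ((X - C u) ^ μ) = (taylorAlgHom u) ((X - C u) ^ μ) := rfl
      _ = ((taylorAlgHom u) (X - C u)) ^ μ := map_pow _ _ _
      _ = (X : Polynomial k) ^ μ := by
          congr 1
          show taylor u (X - C u) = X
          rw [map_sub, taylor_X, taylor_C, add_sub_cancel_right]
  rw [h1, h2]
  have : (X ^ μ * taylor u R).coeff (0 + μ) = (taylor u R).coeff 0 := coeff_X_pow_mul _ _ _
  rw [zero_add] at this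
  rw [this, taylor_coeff_zero]
  exact hRu

lemma rootMult_le_natDegree {Q : Polynomial k} (hQ : Q ≠ 0) (u : k) :
    rootMultiplicity u Q ≤ Q.natDegree := by
  have h1 := pow_rootMultiplicity_dvd Q u
  have := natDegree_le_of_dvd h1 hQ
  rwa [natDegree_pow, natDegree_X_sub_C, mul_one] at this

lemma Qp_ne_zero (hfa : f.eval a ≠ 0) : Qp f a ≠ 0 := fun h => by
  have := Qp_coeff (f := f) (a := a) 0
  rw [h, coeff_zero] at this
  exact dcoef_zero_ne hfa this.symm

/-- The key lemma: if `b` approximates a root better than `a` (they agree up to the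
critical slope of `a` and `f(b)` has strictly bigger valuation), then the critical slope
strictly increases. -/
lemma slope_lt_slope [IsAlgClosed k] (hn : 0 < f.natDegree)
    (hfa : f.eval a ≠ 0) (hfb : f.eval b ≠ 0)
    (hw : lb (b - a) (slope f a)) (hva : va f a < va f b) :
    slope f a < slope f b := by
  set γ := slope f a with hγ
  set w := b - a with hwdef
  set u := w.coeff γ with hu
  have hba : w + a = b := sub_add_cancel b a
  -- u is a root of the residue polynomial
  have hQu : (Qp f a).eval u = 0 := by
    have h1 := eval_coeff hn hfa hw
    rw [hba] at h1
    rw [← h1]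
    exact coeff_eq_zero_of_lt_order (by rwa [va] at hva)
  have hQne : Qp f a ≠ 0 := Qp_ne_zero hfa
  set μ := rootMultiplicity u (Qp f a) with hμ
  have hμpos : 0 < μ := (rootMultiplicity_pos hQne).2 hQu
  have hμn : μ ≤ f.natDegree := le_trans (rootMult_le_natDegree hQne u) natDegree_Qp_le
  have hD : (hasseDeriv μ (Qp f a)).eval u ≠ 0 := taylor_u_coeff_rootMult hQne hQu
  -- the μ-th Taylor coefficient of f at b has order exactly va f a - μ γ
  have hlb := central_lb hn hfa hw μ
  have hco := central_coeff hn hfa hw μ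
  rw [hba] at hlb hco
  rw [← hco] at hD
  obtain ⟨hcne, hordc⟩ := order_eq_of_lb hlb hD
  -- μ is a critical index for b
  have hcrit : μ ∈ crit f b := Finset.mem_filter.2
    ⟨Finset.mem_Icc.2 ⟨hμpos, hμn⟩, hcne⟩
  have hratio := ratio_le_slope hn hcrit
  have hordcf : (cf f μ b).order = va f a - μ * γ := hordc
  rw [hordcf] at hratio
  have hμ1 : (1 : ℚ) ≤ (μ : ℚ) := by exact_mod_cast hμpos
  have hμ0 : (0 : ℚ) < (μ : ℚ) := by linarith
  rw [div_le_iff₀ hμ0] at hratio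
  nlinarith [hratio, hva, hμ1]



/-- The Newton step: starting from any point which is not a root, we can strictly improve
the approximation. -/
lemma exists_step [IsAlgClosed k] (hn : 0 < f.natDegree) (hfa : f.eval a ≠ 0)
    (hfall : ∀ x, f.eval x ≠ 0) :
    ∃ b : HahnSeries ℚ k, (b - a ≠ 0 ∧ (b - a).order = slope f a) ∧
      va f a < va f b ∧ slope f a < slope f b := by
  set γ := slope f a with hγ
  set Q := Qp f a with hQ
  have hQne : Q ≠ 0 := Qp_ne_zero hfa
  have hQdeg : Q.degree ≠ 0 := by
    obtain ⟨i, hi1, hin, hd⟩ := exists_dcoef_ne hn hfa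
    have hc : Q.coeff i ≠ 0 := by rw [hQ, Qp_coeff]; exact hd
    have h1 : 1 ≤ Q.natDegree := le_trans hi1 (le_natDegree_of_ne_zero hc)
    rw [degree_eq_natDegree hQne]
    intro h
    have : Q.natDegree = 0 := by exact_mod_cast h
    omega
  obtain ⟨u, hu⟩ := IsAlgClosed.exists_root Q hQdeg
  have hu0 : u ≠ 0 := by
    intro h
    apply dcoef_zero_ne hfa
    have : Q.coeff 0 = dcoef f a 0 := Qp_coeff 0
    subst h
    rw [← this, coeff_zero_eq_eval_zero]
    exact hu
  set w : HahnSeries ℚ k := HahnSeries.single γ u with hw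
  have hwne : w ≠ 0 := HahnSeries.single_ne_zero hu0
  have hword : w.order = γ := HahnSeries.order_single hu0
  have hwlb : lb w γ := by
    intro r hr
    exact HahnSeries.coeff_single_of_ne (ne_of_lt hr)
  have hwc : w.coeff γ = u := HahnSeries.coeff_single_same γ u
  have hfb : f.eval (w + a) ≠ 0 := hfall _
  have hlb := eval_lb hn hfa hwlb
  have hco := eval_coeff hn hfa hwlb
  rw [hwc] at hco
  have hzero : (f.eval (w + a)).coeff (va f a) = 0 := by rw [hco]; exact hu
  have hle : va f a ≤ va f (w + a) := hlb.order_le hfb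
  have hva : va f a < va f (w + a) := by
    rcases lt_or_eq_of_le hle with h | h
    · exact h
    · exfalso
      apply mt HahnSeries.coeff_order_eq_zero.1 hfb
      show (f.eval (w + a)).coeff (va f (w + a)) = 0
      rw [← h]
      exact hzero
  have hwab : (w + a) - a = w := add_sub_cancel_right w a
  refine ⟨w + a, ⟨by rwa [hwab], by rwa [hwab]⟩, hva, ?_⟩
  exact slope_lt_slope hn hfa hfb (by rwa [hwab]) hva

end HahnAC

namespace HahnAC

variable {k : Type*} [Field k]
variable {f : Polynomial (HahnSeries ℚ k)}

lemma order_add_of_lb {y z : HahnSeries ℚ k} {q : ℚ} (hz : lb z q) (hy : y ≠ 0)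
    (hyq : y.order < q) : z + y ≠ 0 ∧ (z + y).order = y.order := by
  apply order_eq_of_lb
  · exact (hz.mono (le_of_lt hyq)).add (lb_order y)
  · rw [HahnSeries.coeff_add, hz _ hyq, zero_add]
    exact mt HahnSeries.coeff_order_eq_zero.1 hy

/-- The successor relation between approximate roots. -/
def Rel (f : Polynomial (HahnSeries ℚ k)) (a b : HahnSeries ℚ k) : Prop :=
  (b - a ≠ 0 ∧ (b - a).order = slope f a) ∧ va f a < va f b ∧ slope f a < slope f b

lemma Rel.trans {a b c : HahnSeries ℚ k} (hab : Rel f a b) (hbc : Rel f b c) :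
    Rel f a c := by
  obtain ⟨⟨hb0, hbord⟩, hbva, hbsl⟩ := hab
  obtain ⟨⟨hc0, hcord⟩, hcva, hcsl⟩ := hbc
  have hsum : (c - b) + (b - a) = c - a := sub_add_sub_cancel c b a
  have hlb : lb (c - b) (slope f b) := by rw [← hcord]; exact lb_order _
  have h := order_add_of_lb hlb hb0 (by rw [hbord]; exact hbsl)
  rw [hsum, hbord] at h
  exact ⟨h, lt_trans hbva hcva, lt_trans hbsl hcsl⟩

section Chain

variable [IsAlgClosed k]

lemma rel_of_step (hn : 0 < f.natDegree) (hfall : ∀ x, f.eval x ≠ 0)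
    (a : HahnSeries ℚ k) : ∃ b, Rel f a b := exists_step hn (hfall a) hfall

lemma chain_bound (hn : 0 < f.natDegree) (hfall : ∀ x, f.eval x ≠ 0)
    {C : Set (HahnSeries ℚ k)} (hC : IsChain (Rel f) C) :
    ∃ ub, ∀ a ∈ C, Rel f a ub := by
  -- well-definedness of coefficients along the chain
  have wd : ∀ b ∈ C, ∀ b' ∈ C, ∀ q : ℚ, q < slope f b → q < slope f b' →
      b.coeff q = b'.coeff q := by
    intro b hb b' hb' q hq hq'
    rcases eq_or_ne b b' with rfl | hne
    · rfl
    rcases hC hb hb' hne with h | h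
    · have : (b' - b).coeff q = 0 := by
        rw [← h.1.2] at hq; exact coeff_eq_zero_of_lt_order hq
      rw [HahnSeries.coeff_sub] at this
      exact (sub_eq_zero.1 this).symm
    · have : (b - b').coeff q = 0 := by
        rw [← h.1.2] at hq'; exact coeff_eq_zero_of_lt_order hq'
      rw [HahnSeries.coeff_sub] at this
      exact sub_eq_zero.1 this
  rcases C.eq_empty_or_nonempty with rfl | hCne
  · exact ⟨0, fun a ha => absurd ha (Set.notMem_empty a)⟩
  by_cases hmax : ∃ g ∈ C, ∀ b ∈ C, b ≠ g → Rel f b g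
  · obtain ⟨g, hg, hgmax⟩ := hmax
    obtain ⟨ub, hub⟩ := rel_of_step hn hfall g
    refine ⟨ub, fun a ha => ?_⟩
    rcases eq_or_ne a g with rfl | hne
    · exact hub
    · exact (hgmax a ha hne).trans hub
  · push_neg at hmax
    have hsucc : ∀ g ∈ C, ∃ b ∈ C, Rel f g b := by
      intro g hg
      obtain ⟨b, hb, hbne, hbrel⟩ := hmax g hg
      rcases hC hb hg hbne with h | h
      · exact absurd h hbrel
      · exact ⟨b, hb, h⟩
    -- the limit of the chain
    set F : ℚ → k := fun q =>
      if h : ∃ b ∈ C, q < slope f b then h.choose.coeff q else 0 with hF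
    have hFeq : ∀ b ∈ C, ∀ q : ℚ, q < slope f b → F q = b.coeff q := by
      intro b hb q hq
      have hex : ∃ b ∈ C, q < slope f b := ⟨b, hb, hq⟩
      rw [hF]
      simp only [dif_pos hex]
      exact wd _ hex.choose_spec.1 b hb q hex.choose_spec.2 hq
    have hsupp : (Function.support F).IsPWO := by
      rw [Set.isPWO_iff_isWF]
      rw [Set.isWF_iff_no_descending_seq]
      intro φ hφ hmem
      have h0 : F (φ 0) ≠ 0 := hmem 0
      have hex : ∃ b ∈ C, φ 0 < slope f b := by
        by_contra hc
        rw [hF] at h0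
        simp only [dif_neg hc] at h0
        exact h0 rfl
      obtain ⟨b₀, hb₀, hs₀⟩ := hex
      have : ∀ m : ℕ, φ m ∈ b₀.support := by
        intro m
        have hlt : φ m < slope f b₀ := lt_of_le_of_lt (hφ.antitone (Nat.zero_le m)) hs₀
        have := hFeq b₀ hb₀ (φ m) hlt
        rw [HahnSeries.mem_support, ← this]
        exact hmem m
      exact (Set.isWF_iff_no_descending_seq.1 b₀.isWF_support) φ hφ this
    set x : HahnSeries ℚ k := ⟨F, hsupp⟩ with hx
    have hxc : ∀ q, x.coeff q = F q := fun q => rfl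
    have hxb : ∀ b ∈ C, lb (x - b) (slope f b) := by
      intro b hb q hq
      rw [HahnSeries.coeff_sub, hxc, hFeq b hb q hq, sub_self]
    refine ⟨x, fun b hb => ?_⟩
    obtain ⟨b', hb', hrel⟩ := hsucc b hb
    obtain ⟨⟨hb'0, hb'ord⟩, hb'va, hb'sl⟩ := hrel
    -- (A) order of x - b
    have hA : x - b ≠ 0 ∧ (x - b).order = slope f b := by
      have hsum : (x - b') + (b' - b) = x - b := sub_add_sub_cancel x b' b
      have := order_add_of_lb (hxb b' hb') hb'0 (by rw [hb'ord]; exact hb'sl)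
      rwa [hsum, hb'ord] at this
    -- (B) the valuation of f increases
    have hB : va f b < va f x := by
      have hlb' : lb (f.eval ((x - b') + b')) (va f b') :=
        eval_lb hn (hfall b') (hxb b' hb')
      rw [sub_add_cancel] at hlb'
      exact lt_of_lt_of_le hb'va (hlb'.order_le (hfall x))
    -- (C) the slope increases
    have hC' : slope f b < slope f x :=
      slope_lt_slope hn (hfall b) (hfall x) (hxb b hb) hB
    exact ⟨hA, hB, hC'⟩

lemma exists_root_of_natDegree_pos (f : Polynomial (HahnSeries ℚ k))
    (hn : 0 < f.natDegree) : ∃ x, f.eval x = 0 := by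
  by_contra hc
  push_neg at hc
  obtain ⟨m, hm⟩ := exists_maximal_of_chains_bounded
    (fun C hC => chain_bound hn hc hC) (fun {a b c} => Rel.trans)
  obtain ⟨b, hb⟩ := rel_of_step hn hc m
  have : Rel f m m := hb.trans (hm b hb)
  exact lt_irrefl _ this.2.2

end Chain

end HahnAC

/-- If `k` is an algebraically closed field of characteristic `p > 0`, then the
Hahn (Mal'cev–Neumann) field `k((t^ℚ))` of generalized power series with rational
exponents and well-ordered support is algebraically closed. -/
theorem hahnSeries_rat_isAlgClosed
    {k : Type*} [Field k] [IsAlgClosed k] (p : ℕ) [Fact p.Prime] [CharP k p] :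
    IsAlgClosed (HahnSeries ℚ k) := by
  apply IsAlgClosed.of_exists_root
  intro f _hmonic hirr
  obtain ⟨x, hx⟩ := HahnAC.exists_root_of_natDegree_pos f hirr.natDegree_pos
  exact ⟨x, hx⟩
end
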